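/- Let λ ∈ ℝ and f(y) = λy - y³. Define F₁, F₂, F₃ : ℝ³ → ℝ by F₁(x) = f(x₁-x₂) + f(x₁-x₃), F₂(x) = f(x₂-x₁) + f(x₂-x₃), F₃(x) = f(x₃-x₁) + f(x₃-x₂) (the nonlinear consensus vector field on the triangle graph C₃). Then for all (x₁, x₂, x₃) ∈ ℝ³ the identity (x₂ - x₃)·F₁(x) - (x₁ - x₃)·F₂(x) + (x₁ - x₂)·F₃(x) = 0 holds; consequently, wherever x₁ ≠ x₃, the function H(x) = (x₁ - x₂)/(x₁ - x₃) has zero derivative along the vector field (F₁, F₂, F₃), i.e. H is a first integral of the system. -/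

import Mathlib

/-- The coupling function f(y) = λy - y³. -/
def cf (lam y : ℝ) : ℝ := lam * y - y ^ 3

/-- First component of the consensus vector field on the triangle C₃. -/
def F1 (lam x₁ x₂ x₃ : ℝ) : ℝ := cf lam (x₁ - x₂) + cf lam (x₁ - x₃)

/-- Second component of the consensus vector field on the triangle C₃. -/
def F2 (lam x₁ x₂ x₃ : ℝ) : ℝ := cf lam (x₂ - x₁) + cf lam (x₂ - x₃)

/-- Third component of the consensus vector field on the triangle C₃. -/
def F3 (lam x₁ x₂ x₃ : ℝ) : ℝ := cf lam (x₃ - x₁) + cf lam (x₃ - x₂)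

/-- The identity (x₂-x₃)F₁ - (x₁-x₃)F₂ + (x₁-x₂)F₃ = 0 holds for the
consensus vector field on C₃ with coupling f(y) = λy - y³; consequently, wherever
x₁ ≠ x₃, the function H(x) = (x₁-x₂)/(x₁-x₃) has zero derivative along the vector
field, i.e. H is a first integral. -/
theorem triangle_first_integral (lam : ℝ) :
    (∀ x₁ x₂ x₃ : ℝ,
      (x₂ - x₃) * F1 lam x₁ x₂ x₃ - (x₁ - x₃) * F2 lam x₁ x₂ x₃
        + (x₁ - x₂) * F3 lam x₁ x₂ x₃ = 0) ∧
    (∀ x₁ x₂ x₃ : ℝ, x₁ ≠ x₃ →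
      HasDerivAt
        (fun t : ℝ =>
          ((x₁ + t * F1 lam x₁ x₂ x₃) - (x₂ + t * F2 lam x₁ x₂ x₃)) /
          ((x₁ + t * F1 lam x₁ x₂ x₃) - (x₃ + t * F3 lam x₁ x₂ x₃)))
        0 0) := by
  have key : ∀ x₁ x₂ x₃ : ℝ,
      (x₂ - x₃) * F1 lam x₁ x₂ x₃ - (x₁ - x₃) * F2 lam x₁ x₂ x₃
        + (x₁ - x₂) * F3 lam x₁ x₂ x₃ = 0 := by
    intro x₁ x₂ x₃
    simp only [F1, F2, F3, cf]
    ring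
  refine ⟨key, fun x₁ x₂ x₃ h => ?_⟩
  set a := F1 lam x₁ x₂ x₃
  set b := F2 lam x₁ x₂ x₃
  set c := F3 lam x₁ x₂ x₃
  have hN : HasDerivAt (fun t : ℝ => (x₁ + t * a) - (x₂ + t * b)) (a - b) 0 := by
    simpa [mul_comm, Pi.sub_def] using (((hasDerivAt_id (0:ℝ)).const_mul a).const_add x₁).sub
      (((hasDerivAt_id (0:ℝ)).const_mul b).const_add x₂)
  have hD : HasDerivAt (fun t : ℝ => (x₁ + t * a) - (x₃ + t * c)) (a - c) 0 := by
    simpa [mul_comm, Pi.sub_def] using (((hasDerivAt_id (0:ℝ)).const_mul a).const_add x₁).sub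
      (((hasDerivAt_id (0:ℝ)).const_mul c).const_add x₃)
  have h0 : (x₁ + (0:ℝ) * a) - (x₃ + (0:ℝ) * c) ≠ 0 := by
    simpa using sub_ne_zero.mpr h
  have := hN.div hD h0
  convert this using 1
  · rfl
  · rfl
  · rfl
  have hk := key x₁ x₂ x₃
  have hne : x₁ - x₃ ≠ 0 := sub_ne_zero.mpr h
  rw [eq_comm, div_eq_zero_iff]
  left
  simp only [zero_mul, add_zero]
  nlinarith [hk]
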